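/- A countable discrete group G is amenable at infinity if and only if there exists a sequence of maps bⁿ : G → P(G) such that (1) for every n there is a finite set F_n ⊆ G with supp(bⁿ_g) ⊆ F_n for all g ∈ G, and (2) for every g ∈ G, lim_{n→∞} sup_{h∈G} ‖g·bⁿ_h − bⁿ_{g·h}‖₁ = 0. -/

import Mathlib

open MeasureTheory Filter Topology

/-- The space `P(G)` of probability measures on a (countable discrete) group `G`,
viewed inside `ℓ¹(G)`; it carries the weak topology (of pointwise convergence),
which on `P(G)` coincides with the `ℓ¹`-norm topology. -/
abbrev ProbOn (G : Type) : Type :=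
  {f : G → ℝ // (∀ g : G, 0 ≤ f g) ∧ HasSum f 1}

/-- The left translation action of `G` on `P(G)`: `(g • p) h = p (g⁻¹ h)`. -/
noncomputable instance ProbOn.instSMul (G : Type) [Group G] : SMul G (ProbOn G) where
  smul g p := ⟨fun h => p.1 (g⁻¹ * h), fun h => p.2.1 _, by
    have := ((Equiv.mulLeft g⁻¹).hasSum_iff (f := p.1) (a := 1)).mpr p.2.2
    simpa [Function.comp_def] using this⟩

/-- The `ℓ¹` distance between two elements of `P(G)`. -/
noncomputable def l1dist {G : Type} (p q : ProbOn G) : ℝ :=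
  ∑' g : G, |p.1 g - q.1 g|

/-- An action of a (discrete) group `G` by homeomorphisms on a topological space `X` is
amenable if there is a sequence of continuous maps `bⁿ : X → P(G)` such that for every
`g ∈ G`, `lim_n sup_{x ∈ X} ‖g • bⁿ_x − bⁿ_{g•x}‖₁ = 0`. -/
def AmenableActionOn (G : Type) [Group G] (X : Type) [TopologicalSpace X]
    [MulAction G X] : Prop :=
  (∀ g : G, Continuous fun x : X => g • x) ∧
  ∃ b : ℕ → C(X, ProbOn G), ∀ g : G,
    Tendsto (fun n : ℕ => ⨆ x : X, l1dist (g • (b n) x) ((b n) (g • x)))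
      atTop (𝓝 0)

/-- A group `G` is amenable at infinity (topologically amenable) if it admits an amenable
action on some nonempty compact Hausdorff space. -/
def AmenableAtInfinity (G : Type) [Group G] : Prop :=
  ∃ (X : Type) (tX : TopologicalSpace X) (aX : MulAction G X),
    @CompactSpace X tX ∧ @T2Space X tX ∧ Nonempty X ∧
      @AmenableActionOn G _ X tX aX

set_option linter.unusedSectionVars false
namespace HR
open scoped Classical
variable {G : Type} [Group G]

lemma smul_apply (g : G) (p : ProbOn G) (h : G) : (g • p).1 h = p.1 (g⁻¹ * h) := rfl

lemma summable_abs_sub (p q : ProbOn G) : Summable fun h => |p.1 h - q.1 h| := by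
  refine Summable.of_nonneg_of_le (fun h => abs_nonneg _) (fun h => ?_)
    (p.2.2.summable.add q.2.2.summable)
  calc |p.1 h - q.1 h| ≤ |p.1 h| + |q.1 h| := abs_sub _ _
    _ = p.1 h + q.1 h := by rw [abs_of_nonneg (p.2.1 h), abs_of_nonneg (q.2.1 h)]

lemma l1dist_nonneg (p q : ProbOn G) : 0 ≤ l1dist p q :=
  tsum_nonneg fun _ => abs_nonneg _

lemma l1dist_comm (p q : ProbOn G) : l1dist p q = l1dist q p := by
  unfold l1dist; congr 1; ext h; exact abs_sub_comm _ _

lemma l1dist_le_two (p q : ProbOn G) : l1dist p q ≤ 2 := by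
  have h2 : HasSum (fun h => p.1 h + q.1 h) 2 := by have := p.2.2.add q.2.2; norm_num at this; exact this
  refine le_trans (Summable.tsum_le_tsum (fun h => ?_) (summable_abs_sub p q) h2.summable) ?_
  · calc |p.1 h - q.1 h| ≤ |p.1 h| + |q.1 h| := abs_sub _ _
      _ = p.1 h + q.1 h := by rw [abs_of_nonneg (p.2.1 h), abs_of_nonneg (q.2.1 h)]
  · exact le_of_eq h2.tsum_eq

lemma l1dist_triangle (p q r : ProbOn G) : l1dist p r ≤ l1dist p q + l1dist q r := by
  refine le_trans (Summable.tsum_le_tsum (fun h => abs_sub_le _ _ _) (summable_abs_sub p r)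
    ((summable_abs_sub p q).add (summable_abs_sub q r))) ?_
  exact le_of_eq (Summable.tsum_add (summable_abs_sub p q) (summable_abs_sub q r))

lemma l1dist_smul (g : G) (p q : ProbOn G) : l1dist (g • p) (g • q) = l1dist p q := by
  unfold l1dist
  exact (Equiv.mulLeft g⁻¹).tsum_eq fun h => |p.1 h - q.1 h|

lemma apply_le_one (p : ProbOn G) (h : G) : p.1 h ≤ 1 :=
  le_hasSum p.2.2 h fun _ _ => p.2.1 _

noncomputable def trunc (F : Finset G) (p : ProbOn G) (hs : 0 < ∑ h ∈ F, p.1 h) : ProbOn G :=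
  ⟨fun h => if h ∈ F then p.1 h / (∑ k ∈ F, p.1 k) else 0,
   fun h => by dsimp only; split
               · exact div_nonneg (p.2.1 _) hs.le
               · exact le_refl _,
   by
    have h0 : ∀ h ∉ F, (if h ∈ F then p.1 h / (∑ k ∈ F, p.1 k) else 0) = 0 := by
      intro h hh; simp [hh]
    have := hasSum_sum_of_ne_finset_zero (L := SummationFilter.unconditional _) (s := F) h0
    have heq : (∑ h ∈ F, if h ∈ F then p.1 h / (∑ k ∈ F, p.1 k) else 0) = 1 := by
      rw [Finset.sum_congr rfl (fun h hh => if_pos hh), ← Finset.sum_div, div_self hs.ne']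
    rwa [heq] at this⟩

lemma sum_le_one (p : ProbOn G) (F : Finset G) : ∑ h ∈ F, p.1 h ≤ 1 :=
  sum_le_hasSum F (fun h _ => p.2.1 h) p.2.2

lemma l1dist_trunc (F : Finset G) (p : ProbOn G) (hs : 0 < ∑ h ∈ F, p.1 h) :
    l1dist p (trunc F p hs) = 2 * (1 - ∑ h ∈ F, p.1 h) := by
  have hs1 : (∑ h ∈ F, p.1 h) ≤ 1 := sum_le_one p F
  have hsummable : Summable fun h => |p.1 h - (trunc F p hs).1 h| := summable_abs_sub _ _
  have hsplit := Summable.sum_add_tsum_compl (s := F) hsummable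
  have hsum1 : ∑ h ∈ F, |p.1 h - (trunc F p hs).1 h| = 1 - ∑ h ∈ F, p.1 h := by
    have hc : ∀ h ∈ F, |p.1 h - (trunc F p hs).1 h| = p.1 h / (∑ k ∈ F, p.1 k) - p.1 h := by
      intro h hh
      have ht : (trunc F p hs).1 h = p.1 h / (∑ k ∈ F, p.1 k) := if_pos hh
      have hle : p.1 h ≤ p.1 h / (∑ k ∈ F, p.1 k) := (le_div_iff₀ hs).mpr
        (mul_le_of_le_one_right (p.2.1 h) hs1)
      rw [ht, abs_sub_comm, abs_of_nonneg (by linarith)]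
    rw [Finset.sum_congr rfl hc, Finset.sum_sub_distrib, ← Finset.sum_div,
      div_self hs.ne']
  have hsum2 : ∑' h : ((F : Set G)ᶜ : Set G), |p.1 h.1 - (trunc F p hs).1 h.1|
      = 1 - ∑ h ∈ F, p.1 h := by
    have he : ∀ h : ((F : Set G)ᶜ : Set G), |p.1 h.1 - (trunc F p hs).1 h.1| = p.1 h.1 := by
      rintro ⟨h, hh⟩
      have hh' : h ∉ F := by simpa using hh
      simp [trunc, hh', abs_of_nonneg (p.2.1 h)]
    rw [tsum_congr he]
    have h2 := Summable.sum_add_tsum_compl (s := F) p.2.2.summable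
    rw [p.2.2.tsum_eq] at h2
    linarith
  have hl : l1dist p (trunc F p hs) = ∑' h, |p.1 h - (trunc F p hs).1 h| := rfl
  rw [hl, ← hsplit, hsum1, hsum2]; ring

lemma exists_good_finset {X : Type} [TopologicalSpace X] [CompactSpace X]
    (f : C(X, ProbOn G)) {ε : ℝ} (hε : 0 < ε) :
    ∃ F : Finset G, ∀ x, 1 - ε < ∑ h ∈ F, (f x).1 h := by
  classical
  set U : Finset G → Set X := fun F => {x | 1 - ε < ∑ h ∈ F, (f x).1 h} with hU
  have hopen : ∀ F, IsOpen (U F) := fun F => isOpen_lt continuous_const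
    (continuous_finset_sum F fun h _ =>
      ((continuous_apply h).comp continuous_subtype_val).comp f.continuous)
  have hcover : (Set.univ : Set X) ⊆ ⋃ F, U F := by
    intro x _
    have : ∀ᶠ F in (atTop : Filter (Finset G)), 1 - ε < ∑ h ∈ F, (f x).1 h :=
      (f x).2.2.eventually (eventually_gt_nhds (by linarith))
    obtain ⟨F, hF⟩ := this.exists
    exact Set.mem_iUnion.mpr ⟨F, hF⟩
  obtain ⟨t, ht⟩ := isCompact_univ.elim_finite_subcover U hopen hcover
  refine ⟨t.sup id, fun x => ?_⟩
  obtain ⟨F, hFt, hxF⟩ := Set.mem_iUnion₂.mp (ht (Set.mem_univ x))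
  calc 1 - ε < ∑ h ∈ F, (f x).1 h := hxF
    _ ≤ ∑ h ∈ t.sup id, (f x).1 h :=
      Finset.sum_le_sum_of_subset_of_nonneg (Finset.le_sup (f := id) hFt)
        (fun h _ _ => (f x).2.1 h)
lemma eps_pos (n : ℕ) : (0:ℝ) < ((n:ℝ) + 2)⁻¹ := by positivity

lemma eps_lt_one (n : ℕ) : ((n:ℝ) + 2)⁻¹ < 1 := by
  rw [inv_lt_one_iff₀]
  right
  have := Nat.cast_nonneg (α := ℝ) n
  linarith

lemma eps_tendsto : Tendsto (fun n : ℕ => ((n:ℝ) + 2)⁻¹) atTop (𝓝 0) :=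
  tendsto_inv_atTop_zero.comp
    (tendsto_atTop_add_const_right atTop 2 tendsto_natCast_atTop_atTop)

lemma forward {G : Type} [Group G] (hX : AmenableAtInfinity G) :
    ∃ b : ℕ → G → ProbOn G,
      (∀ n : ℕ, ∃ F : Finset G, ∀ g h : G, (b n g).1 h ≠ 0 → h ∈ F) ∧
      (∀ g : G,
        Tendsto (fun n : ℕ => ⨆ h : G, l1dist (g • b n h) (b n (g * h)))
          atTop (𝓝 0)) := by
  obtain ⟨X, tX, aX, hcomp, ht2, ⟨x₀⟩, hact⟩ := hX
  obtain ⟨hcont, b, hb⟩ := hact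
  have hF := fun n => exists_good_finset (G := G) (b n) (eps_pos n)
  choose F hF using hF
  have hspos : ∀ n (x : X), 0 < ∑ h ∈ F n, ((b n) x).1 h := by
    intro n x
    have h1 := hF n x
    have h2 := eps_lt_one n
    linarith
  set c : ℕ → G → ProbOn G :=
    fun n h => trunc (F n) ((b n) (h • x₀)) (hspos n (h • x₀)) with hc
  refine ⟨c, fun n => ⟨F n, fun g h hne => ?_⟩, fun g => ?_⟩
  · by_contra hnF
    exact hne (if_neg hnF)
  · have hbdd : ∀ n, BddAbove (Set.range fun x : X =>
        l1dist (g • (b n) x) ((b n) (g • x))) := by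
      intro n
      exact ⟨2, by rintro _ ⟨x, rfl⟩; exact l1dist_le_two _ _⟩
    have hkey : ∀ n (h : G), l1dist (g • c n h) (c n (g * h)) ≤
        (⨆ x : X, l1dist (g • (b n) x) ((b n) (g • x))) + 4 * ((n:ℝ) + 2)⁻¹ := by
      intro n h
      have htri1 := l1dist_triangle (g • c n h) (g • ((b n) (h • x₀))) (c n (g * h))
      have htri2 := l1dist_triangle (g • ((b n) (h • x₀))) ((b n) ((g * h) • x₀))
        (c n (g * h))
      have h1 : l1dist (g • c n h) (g • ((b n) (h • x₀))) ≤ 2 * ((n:ℝ) + 2)⁻¹ := by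
        rw [l1dist_smul, l1dist_comm, hc]
        rw [l1dist_trunc]
        have := hF n (h • x₀)
        linarith
      have h2 : l1dist (g • ((b n) (h • x₀))) ((b n) ((g * h) • x₀)) ≤
          ⨆ x : X, l1dist (g • (b n) x) ((b n) (g • x)) := by
        rw [mul_smul]
        exact le_ciSup (hbdd n) (h • x₀)
      have h3 : l1dist ((b n) ((g * h) • x₀)) (c n (g * h)) ≤ 2 * ((n:ℝ) + 2)⁻¹ := by
        rw [hc, l1dist_trunc]
        have := hF n ((g * h) • x₀)
        linarith
      calc l1dist (g • c n h) (c n (g * h)) ≤ _ := htri1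
        _ ≤ _ := by linarith
    refine squeeze_zero (fun n => Real.iSup_nonneg fun h => l1dist_nonneg _ _)
      (fun n => ciSup_le fun h => hkey n h) ?_
    have := (hb g).add ((eps_tendsto.const_mul 4).comp tendsto_id)
    simpa using this
lemma continuous_umap {G : Type} (f : G → G) :
    Continuous (Ultrafilter.map f : Ultrafilter G → Ultrafilter G) := by
  rw [ultrafilterBasis_is_basis.continuous_iff]
  rintro _ ⟨s, rfl⟩
  have : (Ultrafilter.map f : Ultrafilter G → Ultrafilter G) ⁻¹' {u | s ∈ u}
      = {u | f ⁻¹' s ∈ u} := by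
    ext u; exact Ultrafilter.mem_map
  rw [this]
  exact ultrafilter_isOpen_basic _

/-- Left translation action of `G` on its Stone–Čech compactification. -/
def uAct (G : Type) [Group G] : MulAction G (Ultrafilter G) where
  smul g U := U.map (g * ·)
  one_smul U := by
    show U.map ((1 : G) * ·) = U
    have : ((1 : G) * ·) = id := funext fun x => one_mul x
    rw [this, Ultrafilter.map_id]
  mul_smul g h U := by
    show U.map ((g * h) * ·) = (U.map (h * ·)).map (g * ·)
    rw [Ultrafilter.map_map]
    congr 1
    funext x
    simp [Function.comp, mul_assoc]

lemma exists_extension {G : Type} [Group G] (F : Finset G) (q : G → ProbOn G)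
    (hq : ∀ g k : G, (q g).1 k ≠ 0 → k ∈ F) :
    ∃ B : C(Ultrafilter G, ProbOn G),
      (∀ (U : Ultrafilter G) (k : G), k ∉ F → (B U).1 k = 0) ∧
      (∀ (U : Ultrafilter G) (k : G),
        Tendsto (fun h : G => (q h).1 k) ↑U (𝓝 ((B U).1 k))) := by
  haveI : CompactSpace (Set.Icc (0:ℝ) 1) := isCompact_iff_compactSpace.mp isCompact_Icc
  set e : G → (G → Set.Icc (0:ℝ) 1) :=
    fun h k => ⟨(q h).1 k, (q h).2.1 k, apply_le_one (q h) k⟩ with he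
  set E := Ultrafilter.extend e with hE
  have htendsto : ∀ U : Ultrafilter G, Tendsto e ↑U (𝓝 (E U)) := by
    intro U
    have := ultrafilter_extend_eq_iff.mp (rfl : E U = Ultrafilter.extend e U)
    rwa [Ultrafilter.coe_map] at this
  have hcoord : ∀ (U : Ultrafilter G) (k : G),
      Tendsto (fun h : G => (q h).1 k) ↑U (𝓝 ((E U k : ℝ))) := by
    intro U k
    have hc : Continuous fun v : G → Set.Icc (0:ℝ) 1 => (v k : ℝ) :=
      continuous_subtype_val.comp (continuous_apply k)
    exact (hc.tendsto _).comp (htendsto U)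
  have hzero : ∀ (U : Ultrafilter G) (k : G), k ∉ F → (E U k : ℝ) = 0 := by
    intro U k hk
    have h0 : ∀ h : G, (q h).1 k = 0 := by
      intro h
      by_contra hne
      exact hk (hq h k hne)
    have : Tendsto (fun h : G => (q h).1 k) ↑U (𝓝 0) := by
      simp only [h0]
      exact tendsto_const_nhds
    exact tendsto_nhds_unique (hcoord U k) this
  have hsum : ∀ U : Ultrafilter G, HasSum (fun k => (E U k : ℝ)) 1 := by
    intro U
    have h0 : ∀ k ∉ F, (E U k : ℝ) = 0 := fun k hk => hzero U k hk
    have hFsum := hasSum_sum_of_ne_finset_zero (L := SummationFilter.unconditional _) (s := F) h0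
    have hconst : ∀ h : G, ∑ k ∈ F, (q h).1 k = 1 := by
      intro h
      have h0' : ∀ k ∉ F, (q h).1 k = 0 := by
        intro k hk; by_contra hne; exact hk (hq h k hne)
      exact ((hasSum_sum_of_ne_finset_zero (s := F) h0').unique (q h).2.2)
    have htS : Tendsto (fun h : G => ∑ k ∈ F, (q h).1 k) ↑U
        (𝓝 (∑ k ∈ F, (E U k : ℝ))) :=
      tendsto_finset_sum F fun k _ => hcoord U k
    have h1 : Tendsto (fun h : G => ∑ k ∈ F, (q h).1 k) ↑U (𝓝 1) := by
      simp only [hconst]; exact tendsto_const_nhds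
    have : (∑ k ∈ F, (E U k : ℝ)) = 1 := tendsto_nhds_unique htS h1
    rwa [this] at hFsum
  refine ⟨⟨fun U => ⟨fun k => (E U k : ℝ), fun k => (E U k).2.1, hsum U⟩, ?_⟩,
    fun U k hk => hzero U k hk, fun U k => hcoord U k⟩
  exact Continuous.subtype_mk (continuous_pi fun k =>
    continuous_subtype_val.comp ((continuous_apply k).comp
      (continuous_ultrafilter_extend e))) _
lemma dist_le_sup {G : Type} [Group G] (F : Finset G) (q : G → ProbOn G)
    (B : C(Ultrafilter G, ProbOn G))
    (hBzero : ∀ (U : Ultrafilter G) (k : G), k ∉ F → (B U).1 k = 0)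
    (hBcoord : ∀ (U : Ultrafilter G) (k : G),
      Tendsto (fun h : G => (q h).1 k) ↑U (𝓝 ((B U).1 k)))
    (g : G) (U : Ultrafilter G) :
    l1dist (g • B U) (B (U.map (g * ·))) ≤
      ⨆ h : G, l1dist (g • q h) (q (g * h)) := by
  classical
  set S : Finset G := F ∪ F.image (g * ·) with hS
  -- vanishing off S
  have hv1 : ∀ k ∉ S, (g • B U).1 k = 0 := by
    intro k hk
    have hk' : g⁻¹ * k ∉ F := by
      intro hmem
      exact hk (Finset.mem_union_right _ (Finset.mem_image.mpr
        ⟨g⁻¹ * k, hmem, by group⟩))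
    exact hBzero U (g⁻¹ * k) hk'
  have hv2 : ∀ k ∉ S, (B (U.map (g * ·))).1 k = 0 := fun k hk =>
    hBzero _ k (fun hmem => hk (Finset.mem_union_left _ hmem))
  -- l1dist as finite sum
  have hfin : l1dist (g • B U) (B (U.map (g * ·))) =
      ∑ k ∈ S, |(g • B U).1 k - (B (U.map (g * ·))).1 k| := by
    refine tsum_eq_sum fun k hk => ?_
    rw [hv1 k hk, hv2 k hk]; simp
  -- coordinatewise limits
  have hc1 : ∀ k : G, Tendsto (fun h : G => (g • q h).1 k) ↑U (𝓝 ((g • B U).1 k)) :=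
    fun k => hBcoord U (g⁻¹ * k)
  have hc2 : ∀ k : G, Tendsto (fun h : G => (q (g * h)).1 k) ↑U
      (𝓝 ((B (U.map (g * ·))).1 k)) := by
    intro k
    have := hBcoord (U.map (g * ·)) k
    rw [Ultrafilter.coe_map, tendsto_map'_iff] at this
    exact this
  have hsumT : Tendsto (fun h : G => ∑ k ∈ S, |(g • q h).1 k - (q (g * h)).1 k|) ↑U
      (𝓝 (∑ k ∈ S, |(g • B U).1 k - (B (U.map (g * ·))).1 k|)) :=
    tendsto_finset_sum S fun k _ => ((hc1 k).sub (hc2 k)).abs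
  -- pointwise bound
  have hbdd : BddAbove (Set.range fun h : G => l1dist (g • q h) (q (g * h))) :=
    ⟨2, by rintro _ ⟨h, rfl⟩; exact l1dist_le_two _ _⟩
  have hpt : ∀ h : G, ∑ k ∈ S, |(g • q h).1 k - (q (g * h)).1 k| ≤
      ⨆ h : G, l1dist (g • q h) (q (g * h)) := by
    intro h
    have h1 : ∑ k ∈ S, |(g • q h).1 k - (q (g * h)).1 k| ≤ l1dist (g • q h) (q (g * h)) :=
      Summable.sum_le_tsum S (fun k _ => abs_nonneg _) (summable_abs_sub _ _)
    exact h1.trans (le_ciSup hbdd h)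
  rw [hfin]
  exact le_of_tendsto hsumT (Eventually.of_forall hpt)

lemma backward {G : Type} [Group G]
    (hb : ∃ b : ℕ → G → ProbOn G,
      (∀ n : ℕ, ∃ F : Finset G, ∀ g h : G, (b n g).1 h ≠ 0 → h ∈ F) ∧
      (∀ g : G,
        Tendsto (fun n : ℕ => ⨆ h : G, l1dist (g • b n h) (b n (g * h)))
          atTop (𝓝 0))) :
    AmenableAtInfinity G := by
  obtain ⟨q, hsupp, hconv⟩ := hb
  choose F hF using hsupp
  choose B hB1 hB2 using fun n => exists_extension (F n) (q n) (hF n)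
  letI : MulAction G (Ultrafilter G) := uAct G
  refine ⟨Ultrafilter G, inferInstance, inferInstance, inferInstance, inferInstance,
    ⟨pure 1⟩, fun g => continuous_umap (g * ·), B, fun g => ?_⟩
  refine squeeze_zero (fun n => Real.iSup_nonneg fun U => l1dist_nonneg _ _)
    (fun n => ciSup_le fun U => ?_) (hconv g)
  exact dist_le_sup (F n) (q n) (B n) (hB1 n) (hB2 n) g U
end HR


/-- Higson–Roe characterization: a countable discrete group `G` is amenable at infinity if
and only if there is a sequence of maps `bⁿ : G → P(G)` with uniformly finite supports and
asymptotic equivariance: `lim_n sup_{h ∈ G} ‖g • bⁿ_h − bⁿ_{gh}‖₁ = 0` for every `g`. -/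
theorem amenable_at_infinity_iff_finitely_supported_system
    (G : Type) [Group G] [Countable G] :
    AmenableAtInfinity G ↔
      ∃ b : ℕ → G → ProbOn G,
        (∀ n : ℕ, ∃ F : Finset G, ∀ g h : G, (b n g).1 h ≠ 0 → h ∈ F) ∧
        (∀ g : G,
          Tendsto (fun n : ℕ => ⨆ h : G, l1dist (g • b n h) (b n (g * h)))
            atTop (𝓝 0)) := by
  exact ⟨fun h => HR.forward h, fun h => HR.backward h⟩
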